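/- arXiv:math/0202127 — 3 statements merged into one kernel-verified Lean document; each statement's English description precedes it below -/
import Mathlib

section
/- Let a₁,…,a_k be nonzero vectors in ℝⁿ, let L be their linear span, let A = (1/k)·Σᵢ aᵢaᵢᵀ/|aᵢ|², and let λ be the smallest positive eigenvalue of A. For x ∈ ℝⁿ, let y and z denote the orthogonal projections of x onto Lᗮ and L respectively. Then the average over i ∈ {1,…,k} of |x − (aᵢᵀx/|aᵢ|²)·aᵢ − y|² equals |z|² − zᵀAz, and this is at most (1 − λ)·|z|². -/
open Matrix
open scoped RealInnerProductSpace

section aux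
variable {n : ℕ}

lemma aux_inner_dot (u v : EuclideanSpace ℝ (Fin n)) : ⟪u, v⟫ = (u : Fin n → ℝ) ⬝ᵥ v := by
  simp [PiLp.inner_apply, dotProduct]
  exact Finset.sum_congr rfl fun _ _ => mul_comm _ _

lemma aux_vecMulVec_mulVec (w : Fin n → ℝ) (v : Fin n → ℝ) :
    (vecMulVec w w).mulVec v = (w ⬝ᵥ v) • w := by
  ext i
  simp [vecMulVec, mulVec, dotProduct, Finset.mul_sum, Finset.sum_mul]
  congr 1; ext j; ring

lemma aux_sum_mulVec {m : ℕ} (M : Fin m → Matrix (Fin n) (Fin n) ℝ) (v : Fin n → ℝ) :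
    (∑ i, M i).mulVec v = ∑ i, (M i).mulVec v := by
  ext j
  simp only [mulVec, dotProduct, Finset.sum_apply, Matrix.sum_apply, Finset.sum_mul]
  rw [Finset.sum_comm]

lemma aux_dotProduct_sum {m : ℕ} (v : Fin n → ℝ) (f : Fin m → (Fin n → ℝ)) :
    v ⬝ᵥ (∑ i, f i) = ∑ i, v ⬝ᵥ f i := by
  simp only [dotProduct, Finset.sum_apply, Finset.mul_sum]
  rw [Finset.sum_comm]

end aux

/-- Average effect of one random balancing step: with `A = (1/k)Σ aᵢaᵢᵀ/|aᵢ|²` and `λ` the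
smallest positive eigenvalue of `A`, and `y`, `z` the projections of `x` onto `Lᗮ`, `L`,
the average of `|x − (aᵢᵀx/|aᵢ|²)aᵢ − y|²` equals `|z|² − zᵀAz ≤ (1−λ)|z|²`. -/
theorem stmt6 {n k : ℕ} (hk : 0 < k) (a : Fin k → EuclideanSpace ℝ (Fin n))
    (ha : ∀ i, a i ≠ 0)
    (L : Submodule ℝ (EuclideanSpace ℝ (Fin n)))
    (hL : L = Submodule.span ℝ (Set.range a))
    (A : Matrix (Fin n) (Fin n) ℝ)
    (hA : A = (1 / (k : ℝ)) • ∑ i, (‖a i‖ ^ 2)⁻¹ • vecMulVec (a i) (a i))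
    (lam : ℝ) (hlam_pos : 0 < lam)
    (hlam_eig : ∃ v : Fin n → ℝ, v ≠ 0 ∧ A.mulVec v = lam • v)
    (hlam_min : ∀ mu : ℝ, 0 < mu → (∃ v : Fin n → ℝ, v ≠ 0 ∧ A.mulVec v = mu • v) →
      lam ≤ mu)
    (x : EuclideanSpace ℝ (Fin n)) :
    letI y : EuclideanSpace ℝ (Fin n) := Submodule.orthogonalProjectionOnto Lᗮ x
    letI z : EuclideanSpace ℝ (Fin n) := Submodule.orthogonalProjectionOnto L x
    (1 / (k : ℝ)) * ∑ i, ‖x - (⟪a i, x⟫ / ‖a i‖ ^ 2) • a i - y‖ ^ 2 =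
        ‖z‖ ^ 2 - z ⬝ᵥ A.mulVec z ∧
      ‖z‖ ^ 2 - z ⬝ᵥ A.mulVec z ≤ (1 - lam) * ‖z‖ ^ 2 := by
  set y : EuclideanSpace ℝ (Fin n) := (↑(Submodule.orthogonalProjectionOnto Lᗮ x) : EuclideanSpace ℝ (Fin n)) with hy
  set z : EuclideanSpace ℝ (Fin n) := (↑(Submodule.orthogonalProjectionOnto L x) : EuclideanSpace ℝ (Fin n)) with hz
  have hnormsq : ∀ i, (0:ℝ) < ‖a i‖ ^ 2 := fun i => pow_pos (norm_pos_iff.mpr (ha i)) 2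
  -- quadratic form formula
  have hQ : ∀ v : Fin n → ℝ,
      v ⬝ᵥ A.mulVec v = (1 / (k : ℝ)) * ∑ i, (‖a i‖ ^ 2)⁻¹ * ((a i : Fin n → ℝ) ⬝ᵥ v) ^ 2 := by
    intro v
    have : A.mulVec v = (1 / (k:ℝ)) •
        ∑ i, (‖a i‖ ^ 2)⁻¹ • (((a i : Fin n → ℝ) ⬝ᵥ v) • (a i : Fin n → ℝ)) := by
      rw [hA, smul_mulVec, aux_sum_mulVec (fun i => (‖a i‖ ^ 2)⁻¹ • vecMulVec ((a i : Fin n → ℝ)) (a i))]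
      congr 1
      refine Finset.sum_congr rfl fun i _ => ?_
      rw [smul_mulVec, aux_vecMulVec_mulVec]
    rw [this]
    rw [dotProduct_smul, aux_dotProduct_sum]
    congr 1
    refine Finset.sum_congr rfl fun i _ => ?_
    rw [dotProduct_smul, dotProduct_smul, smul_eq_mul, smul_eq_mul, dotProduct_comm]
    ring
  -- kernel lemma
  have hker : ∀ v : Fin n → ℝ, A.mulVec v = 0 → ∀ i, (a i : Fin n → ℝ) ⬝ᵥ v = 0 := by
    intro v hv i
    have h0 : (0:ℝ) = (1 / (k : ℝ)) * ∑ j, (‖a j‖ ^ 2)⁻¹ * ((a j : Fin n → ℝ) ⬝ᵥ v) ^ 2 := by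
      rw [← hQ v, hv, dotProduct_zero]
    have hsum : ∑ j, (‖a j‖ ^ 2)⁻¹ * ((a j : Fin n → ℝ) ⬝ᵥ v) ^ 2 = 0 := by
      have hk' : (0:ℝ) < 1 / (k:ℝ) := by positivity
      nlinarith [h0]
    have hterm : ∀ j ∈ Finset.univ, (0:ℝ) ≤ (‖a j‖ ^ 2)⁻¹ * ((a j : Fin n → ℝ) ⬝ᵥ v) ^ 2 :=
      fun j _ => by positivity
    have h2 := (Finset.sum_eq_zero_iff_of_nonneg hterm).mp hsum i (Finset.mem_univ i)
    have hpos : (0:ℝ) < (‖a i‖ ^ 2)⁻¹ := inv_pos.mpr (hnormsq i)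
    have h3 : ((a i : Fin n → ℝ) ⬝ᵥ v) ^ 2 = 0 := (mul_eq_zero.mp h2).resolve_left hpos.ne'
    exact pow_eq_zero_iff (by norm_num) |>.mp h3
  -- membership facts
  have haL : ∀ i, a i ∈ L := fun i => hL ▸ Submodule.subset_span ⟨i, rfl⟩
  have hzL : (z : EuclideanSpace ℝ (Fin n)) ∈ L := (Submodule.orthogonalProjectionOnto L x).2
  have hyL : (y : EuclideanSpace ℝ (Fin n)) ∈ Lᗮ := (Submodule.orthogonalProjectionOnto Lᗮ x).2
  have hxyz : x - y = z :=
    sub_eq_iff_eq_add.mpr (L.starProjection_add_starProjection_orthogonal x).symm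
  have hay : ∀ i, ⟪a i, (y : EuclideanSpace ℝ (Fin n))⟫ = 0 := fun i =>
    (Submodule.mem_orthogonal L y).mp hyL (a i) (haL i)
  have hax : ∀ i, ⟪a i, x⟫ = ⟪a i, (z : EuclideanSpace ℝ (Fin n))⟫ := by
    intro i
    have : x = z + y := by rw [← hxyz]; abel
    rw [this, inner_add_right, hay, add_zero]
  -- first part
  have hterm : ∀ i, ‖x - (⟪a i, x⟫ / ‖a i‖ ^ 2) • a i - y‖ ^ 2
      = ‖z‖ ^ 2 - (‖a i‖ ^ 2)⁻¹ * ⟪a i, (z : EuclideanSpace ℝ (Fin n))⟫ ^ 2 := by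
    intro i
    have hrw : x - (⟪a i, x⟫ / ‖a i‖ ^ 2) • a i - y
        = (z : EuclideanSpace ℝ (Fin n)) - (⟪a i, (z:EuclideanSpace ℝ (Fin n))⟫ / ‖a i‖ ^ 2) • a i := by
      rw [hax i, ← hxyz]; abel
    rw [hrw, norm_sub_sq_real, real_inner_smul_right, norm_smul, Real.norm_eq_abs, mul_pow,
      sq_abs, real_inner_comm z (a i)]
    have h2 : ‖a i‖ ^ 2 ≠ 0 := (hnormsq i).ne'
    field_simp
    ring
  have hdot : ∀ i, ⟪a i, (z : EuclideanSpace ℝ (Fin n))⟫ = (a i : Fin n → ℝ) ⬝ᵥ (z : Fin n → ℝ) :=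
    fun i => aux_inner_dot _ _
  have part1 : (1 / (k : ℝ)) * ∑ i, ‖x - (⟪a i, x⟫ / ‖a i‖ ^ 2) • a i - y‖ ^ 2 =
      ‖z‖ ^ 2 - (z : Fin n → ℝ) ⬝ᵥ A.mulVec z := by
    rw [hQ]
    have : ∑ i, ‖x - (⟪a i, x⟫ / ‖a i‖ ^ 2) • a i - y‖ ^ 2
        = ∑ i : Fin k, (‖z‖ ^ 2 - (‖a i‖ ^ 2)⁻¹ * ((a i : Fin n → ℝ) ⬝ᵥ (z : Fin n → ℝ)) ^ 2) := by
      refine Finset.sum_congr rfl fun i _ => ?_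
      rw [hterm i, hdot i]
    rw [this, Finset.sum_sub_distrib, Finset.sum_const, Finset.card_univ, Fintype.card_fin]
    have hk' : (k:ℝ) ≠ 0 := Nat.cast_ne_zero.mpr hk.ne'
    field_simp
    ring
  refine ⟨part1, ?_⟩
  -- second part: lam * ‖z‖^2 ≤ z ⬝ᵥ A z
  have hH : A.IsHermitian := by
    have : Aᴴ = A := by
      ext i j
      simp only [hA, Matrix.conjTranspose_apply, Matrix.smul_apply, Matrix.sum_apply,
        vecMulVec_apply, smul_eq_mul, star_trivial]
      congr 1
      refine Finset.sum_congr rfl fun l _ => ?_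
      ring
    exact this
  have hT : Aᵀ = A := by
    ext i j
    have := congrFun (congrFun hH i) j
    simpa using this
  set b := hH.eigenvectorBasis with hb
  set μ := hH.eigenvalues with hmu
  have heig : ∀ i, A.mulVec (show Fin n → ℝ from b i) = μ i • (show Fin n → ℝ from b i) := by
    intro i
    exact hH.mulVec_eigenvectorBasis i
  have hsymv : ∀ v : Fin n → ℝ, A.vecMul v = A.mulVec v := by
    intro v
    rw [← Matrix.mulVec_transpose, hT]
  have key : ∀ i, (b i : Fin n → ℝ) ⬝ᵥ A.mulVec z = μ i * ((b i : Fin n → ℝ) ⬝ᵥ z) := by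
    intro i
    rw [dotProduct_mulVec, hsymv, heig i]
    simp [dotProduct, Finset.mul_sum, mul_assoc]
  have hbdot : ∀ (u v : EuclideanSpace ℝ (Fin n)), ⟪u, v⟫ = (u : Fin n → ℝ) ⬝ᵥ v :=
    aux_inner_dot
  have hzdec : (z : Fin n → ℝ) ⬝ᵥ A.mulVec z = ∑ i, μ i * ((b i : Fin n → ℝ) ⬝ᵥ (z : Fin n → ℝ)) ^ 2 := by
    have h := OrthonormalBasis.sum_inner_mul_inner b z (WithLp.toLp 2 (A.mulVec z))
    rw [hbdot, WithLp.ofLp_toLp] at h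
    rw [← h]
    refine Finset.sum_congr rfl fun i _ => ?_
    rw [hbdot, hbdot, WithLp.ofLp_toLp, key i, dotProduct_comm]
    ring
  have hpar : ‖z‖ ^ 2 = ∑ i, ((b i : Fin n → ℝ) ⬝ᵥ (z : Fin n → ℝ)) ^ 2 := by
    have h := OrthonormalBasis.sum_inner_mul_inner b z z
    rw [real_inner_self_eq_norm_sq] at h
    rw [← h]
    refine Finset.sum_congr rfl fun i _ => ?_
    rw [hbdot, hbdot, dotProduct_comm]
    ring
  have hbne : ∀ i, (⇑(b i) : Fin n → ℝ) ≠ 0 := by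
    intro i h0
    exact b.orthonormal.ne_zero i (WithLp.ofLp_injective 2 h0)
  have hbnorm : ∀ i, ‖b i‖ = 1 := fun i => b.orthonormal.1 i
  have hbb : ∀ i, (b i : Fin n → ℝ) ⬝ᵥ (b i : Fin n → ℝ) = 1 := by
    intro i
    have h := hbdot (b i) (b i)
    rw [real_inner_self_eq_norm_sq, hbnorm i] at h
    simpa using h.symm
  have hmu_eq : ∀ i, μ i = 1 / (k:ℝ) * ∑ j, (‖a j‖ ^ 2)⁻¹ * ((a j : Fin n → ℝ) ⬝ᵥ (b i : Fin n → ℝ)) ^ 2 := by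
    intro i
    have hQb := hQ (show Fin n → ℝ from b i)
    rw [heig i, dotProduct_smul, smul_eq_mul, hbb i, mul_one] at hQb
    exact hQb
  have hmu_nonneg : ∀ i, 0 ≤ μ i := by
    intro i
    rw [hmu_eq i]
    have h3 : (0:ℝ) ≤ ∑ j, (‖a j‖ ^ 2)⁻¹ * ((a j : Fin n → ℝ) ⬝ᵥ (b i : Fin n → ℝ)) ^ 2 :=
      Finset.sum_nonneg fun j _ => mul_nonneg (inv_nonneg.mpr (hnormsq j).le) (sq_nonneg _)
    exact mul_nonneg (by positivity) h3
  have hterm2 : ∀ i, lam * ((b i : Fin n → ℝ) ⬝ᵥ (z : Fin n → ℝ)) ^ 2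
      ≤ μ i * ((b i : Fin n → ℝ) ⬝ᵥ (z : Fin n → ℝ)) ^ 2 := by
    intro i
    rcases lt_or_eq_of_le (hmu_nonneg i) with hpos | hzero
    · exact mul_le_mul_of_nonneg_right
        (hlam_min (μ i) hpos ⟨b i, hbne i, heig i⟩) (sq_nonneg _)
    · -- μ i = 0 : b i ∈ Lᗮ so b i ⬝ᵥ z = 0
      have hker0 : A.mulVec (b i) = 0 := by rw [heig i, ← hzero, zero_smul]
      have hdots := hker (b i) hker0
      have hbL : (b i : EuclideanSpace ℝ (Fin n)) ∈ Lᗮ := by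
        rw [hL]
        rw [Submodule.mem_orthogonal]
        intro u hu
        induction hu using Submodule.span_induction with
        | mem u hu' =>
          obtain ⟨j, rfl⟩ := hu'
          rw [hbdot]
          exact hdots j
        | zero => simp
        | add u v _ _ h1 h2 => rw [inner_add_left, h1, h2, add_zero]
        | smul c u _ h1 => rw [real_inner_smul_left, h1, mul_zero]
      have : (b i : Fin n → ℝ) ⬝ᵥ (z : Fin n → ℝ) = 0 := by
        rw [← hbdot]
        exact (Submodule.mem_orthogonal' L (b i)).mp hbL z hzL
      rw [this]
      simp
  have hfin : lam * ‖z‖ ^ 2 ≤ (z : Fin n → ℝ) ⬝ᵥ A.mulVec z := by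
    rw [hpar, hzdec, Finset.mul_sum]
    exact Finset.sum_le_sum fun i _ => hterm2 i
  nlinarith [hfin]
end

section
/- Let a₁,…,a_k be nonzero vectors in ℝⁿ, let L be their linear span, let A = (1/k)·Σᵢ aᵢaᵢᵀ/|aᵢ|², and let λ be the smallest positive eigenvalue of A. For x ∈ ℝⁿ, let y and z denote the orthogonal projections of x onto Lᗮ and L respectively. Let i₁, i₂, … be independent random indices, each uniformly distributed on {1,…,k}, and define the random sequence X⁰ = x and X^{t+1} = X^t − (a_{i_{t+1}}ᵀX^t/|a_{i_{t+1}}|²)·a_{i_{t+1}}. Then for every t ≥ 0, 𝔼(|X^t − y|²) ≤ (1 − λ)^t · |z|². -/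
open Matrix MeasureTheory ProbabilityTheory
open scoped RealInnerProductSpace ENNReal

lemma piLp_sum_apply {n : ℕ} {ι : Type*} (s : Finset ι) (f : ι → EuclideanSpace ℝ (Fin n))
    (j : Fin n) : (∑ i ∈ s, f i) j = ∑ i ∈ s, f i j :=
  by rw [WithLp.ofLp_sum, Finset.sum_apply]

lemma piLp_smul_apply {n : ℕ} (c : ℝ) (x : EuclideanSpace ℝ (Fin n)) (j : Fin n) :
    (c • x) j = c * x j := rfl

/-- The averaging operator `u ↦ (1/k) Σⱼ ⟪aⱼ,u⟫/‖aⱼ‖² • aⱼ` as a linear map. -/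
noncomputable def Smap {n : ℕ} (k : ℕ) (a : Fin k → EuclideanSpace ℝ (Fin n)) :
    EuclideanSpace ℝ (Fin n) →ₗ[ℝ] EuclideanSpace ℝ (Fin n) where
  toFun u := (k : ℝ)⁻¹ • ∑ j, ((‖a j‖ ^ 2)⁻¹ * ⟪a j, u⟫) • a j
  map_add' u v := by
    simp only [inner_add_right, mul_add, add_smul, Finset.sum_add_distrib, smul_add]
  map_smul' c u := by
    simp only [real_inner_smul_right, RingHom.id_apply]
    rw [smul_smul, Finset.smul_sum, Finset.smul_sum]
    refine Finset.sum_congr rfl fun j _ => ?_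
    rw [smul_smul, smul_smul]
    ring_nf

lemma Smap_mulVec {n k : ℕ} (a : Fin k → EuclideanSpace ℝ (Fin n))
    (A : Matrix (Fin n) (Fin n) ℝ)
    (hA : A = (1 / (k : ℝ)) • ∑ i, (‖a i‖ ^ 2)⁻¹ • vecMulVec (a i) (a i))
    (u : EuclideanSpace ℝ (Fin n)) : A.mulVec u = Smap k a u := by
  funext j
  have hrhs : Smap k a u j = (k : ℝ)⁻¹ * ∑ i, ((‖a i‖ ^ 2)⁻¹ * ⟪a i, u⟫) * a i j := by
    show ((k : ℝ)⁻¹ • ∑ i, ((‖a i‖ ^ 2)⁻¹ * ⟪a i, u⟫) • a i) j = _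
    rw [piLp_smul_apply, piLp_sum_apply]
    norm_num [piLp_smul_apply]
  rw [hrhs, hA]
  simp only [Matrix.mulVec, dotProduct, Matrix.smul_apply, Matrix.sum_apply,
    Matrix.vecMulVec_apply, smul_eq_mul, PiLp.inner_apply, RCLike.inner_apply, conj_trivial,
    one_div]
  simp only [Finset.mul_sum, Finset.sum_mul]
  rw [Finset.sum_comm]
  exact Finset.sum_congr rfl fun i _ => Finset.sum_congr rfl fun x _ => by ring

lemma proj_step {n : ℕ} (b y w : EuclideanSpace ℝ (Fin n)) (hb : b ≠ 0) (hby : ⟪b, y⟫ = 0) :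
    ‖(w - (⟪b, w⟫ / ‖b‖ ^ 2) • b) - y‖ ^ 2 = ‖w - y‖ ^ 2 - ⟪b, w - y⟫ ^ 2 / ‖b‖ ^ 2 := by
  have hb2 : ‖b‖ ^ 2 ≠ 0 := pow_ne_zero _ (norm_ne_zero_iff.mpr hb)
  have h1 : ⟪b, w⟫ = ⟪b, w - y⟫ := by rw [inner_sub_right, hby, sub_zero]
  have h2 : (w - (⟪b, w⟫ / ‖b‖ ^ 2) • b) - y = (w - y) - (⟪b, w - y⟫ / ‖b‖ ^ 2) • b := by
    rw [h1, sub_right_comm]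
  rw [h2, norm_sub_sq_real, real_inner_smul_right, norm_smul, mul_pow, Real.norm_eq_abs, sq_abs,
    real_inner_comm (w - y) b]
  field_simp
  ring

lemma Smap_inner {n k : ℕ} (a : Fin k → EuclideanSpace ℝ (Fin n))
    (u v : EuclideanSpace ℝ (Fin n)) :
    ⟪u, Smap k a v⟫ = (k : ℝ)⁻¹ * ∑ j, (‖a j‖ ^ 2)⁻¹ * (⟪a j, u⟫ * ⟪a j, v⟫) := by
  show ⟪u, (k : ℝ)⁻¹ • ∑ j, ((‖a j‖ ^ 2)⁻¹ * ⟪a j, v⟫) • a j⟫ = _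
  rw [real_inner_smul_right, inner_sum]
  congr 1
  refine Finset.sum_congr rfl fun j _ => ?_
  rw [real_inner_smul_right, real_inner_comm u (a j)]
  ring

lemma Smap_mem {n k : ℕ} (a : Fin k → EuclideanSpace ℝ (Fin n))
    (L : Submodule ℝ (EuclideanSpace ℝ (Fin n))) (hL : L = Submodule.span ℝ (Set.range a))
    (u : EuclideanSpace ℝ (Fin n)) : Smap k a u ∈ L := by
  show (k : ℝ)⁻¹ • ∑ j, ((‖a j‖ ^ 2)⁻¹ * ⟪a j, u⟫) • a j ∈ L
  refine L.smul_mem _ (Submodule.sum_mem _ fun j _ => L.smul_mem _ ?_)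
  exact hL ▸ Submodule.subset_span ⟨j, rfl⟩

lemma Smap_inner_self_pos {n k : ℕ} (hk : 0 < k) (a : Fin k → EuclideanSpace ℝ (Fin n))
    (ha : ∀ i, a i ≠ 0)
    (L : Submodule ℝ (EuclideanSpace ℝ (Fin n))) (hL : L = Submodule.span ℝ (Set.range a))
    (u : EuclideanSpace ℝ (Fin n)) (huL : u ∈ L) (hu : u ≠ 0) :
    0 < ⟪u, Smap k a u⟫ := by
  rw [Smap_inner]
  have hterm : ∀ j, 0 ≤ (‖a j‖ ^ 2)⁻¹ * (⟪a j, u⟫ * ⟪a j, u⟫) := fun j =>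
    mul_nonneg (inv_nonneg.2 (by positivity)) (mul_self_nonneg _)
  have hsum_nonneg : (0:ℝ) ≤ ∑ j, (‖a j‖ ^ 2)⁻¹ * (⟪a j, u⟫ * ⟪a j, u⟫) :=
    Finset.sum_nonneg fun j _ => hterm j
  rcases eq_or_lt_of_le hsum_nonneg with h0 | hpos
  · exfalso
    have hz : ∀ j ∈ Finset.univ, (‖a j‖ ^ 2)⁻¹ * (⟪a j, u⟫ * ⟪a j, u⟫) = 0 :=
      (Finset.sum_eq_zero_iff_of_nonneg (fun j _ => hterm j)).1 h0.symm
    have hinner : ∀ j, ⟪a j, u⟫ = 0 := by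
      intro j
      have h1 := hz j (Finset.mem_univ j)
      have hc : (‖a j‖ ^ 2)⁻¹ ≠ 0 := inv_ne_zero (pow_ne_zero _ (norm_ne_zero_iff.2 (ha j)))
      exact mul_self_eq_zero.1 ((mul_eq_zero.1 h1).resolve_left hc)
    have huu : ⟪u, u⟫ = 0 := by
      have hspan : ∀ w ∈ Submodule.span ℝ (Set.range a), ⟪w, u⟫ = 0 := by
        intro w hw
        induction hw using Submodule.span_induction with
        | mem w hw => obtain ⟨j, rfl⟩ := hw; exact hinner j
        | zero => exact inner_zero_left u
        | add w₁ w₂ _ _ h1 h2 => rw [inner_add_left, h1, h2, add_zero]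
        | smul c w _ h1 => rw [real_inner_smul_left, h1, mul_zero]
      exact hspan u (hL ▸ huL)
    exact hu (inner_self_eq_zero.1 huu)
  · exact mul_pos (inv_pos.2 (by exact_mod_cast hk)) hpos

lemma aux_quad {n k : ℕ} (hk : 0 < k) (a : Fin k → EuclideanSpace ℝ (Fin n))
    (ha : ∀ i, a i ≠ 0)
    (L : Submodule ℝ (EuclideanSpace ℝ (Fin n))) (hL : L = Submodule.span ℝ (Set.range a))
    (A : Matrix (Fin n) (Fin n) ℝ)
    (hA : A = (1 / (k : ℝ)) • ∑ i, (‖a i‖ ^ 2)⁻¹ • vecMulVec (a i) (a i))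
    (lam : ℝ)
    (hlam_min : ∀ mu : ℝ, 0 < mu → (∃ v : Fin n → ℝ, v ≠ 0 ∧ A.mulVec v = mu • v) →
      lam ≤ mu) :
    ∀ u : EuclideanSpace ℝ (Fin n), u ∈ L → lam * ‖u‖ ^ 2 ≤ ⟪u, Smap k a u⟫ := by
  have hSL : ∀ u ∈ L, Smap k a u ∈ L := fun u _ => Smap_mem a L hL u
  set T : L →ₗ[ℝ] L := (Smap k a).restrict hSL with hTdef
  have hTcoe : ∀ u : L, (T u : EuclideanSpace ℝ (Fin n)) = Smap k a u := fun u =>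
    LinearMap.restrict_coe_apply _ _ _
  have hT : T.IsSymmetric := by
    intro u v
    rw [Submodule.coe_inner, Submodule.coe_inner, hTcoe, hTcoe, real_inner_comm,
      Smap_inner, Smap_inner]
    congr 1
    refine Finset.sum_congr rfl fun j _ => by ring
  have hn : Module.finrank ℝ L = Module.finrank ℝ L := rfl
  set b := hT.eigenvectorBasis hn with hb
  set μ := hT.eigenvalues hn with hμ
  have heig : ∀ i, T (b i) = (μ i) • b i := fun i => hT.apply_eigenvectorBasis hn i
  have hbnorm : ∀ i, ‖b i‖ = 1 := fun i => b.orthonormal.1 i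
  have hbne : ∀ i, ((b i : L) : EuclideanSpace ℝ (Fin n)) ≠ 0 := by
    intro i h
    have hnz : ‖b i‖ = 1 := hbnorm i
    rw [show (b i : L) = 0 from Subtype.ext h] at hnz
    simp at hnz
  have hμpos : ∀ i, 0 < μ i := by
    intro i
    have h1 : ⟪((b i : L) : EuclideanSpace ℝ (Fin n)), Smap k a (b i : L)⟫ = μ i := by
      rw [← hTcoe, ← Submodule.coe_inner, heig i, real_inner_smul_right,
        real_inner_self_eq_norm_sq, hbnorm i]
      ring
    have h2 := Smap_inner_self_pos hk a ha L hL ((b i : L) : EuclideanSpace ℝ (Fin n))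
      (b i).2 (hbne i)
    rw [h1] at h2
    exact h2
  have hlam_le : ∀ i, lam ≤ μ i := by
    intro i
    refine hlam_min (μ i) (hμpos i) ⟨((b i : L) : EuclideanSpace ℝ (Fin n)), (WithLp.ofLp_eq_zero 2).ne.2 (hbne i), ?_⟩
    show A.mulVec ((b i : L) : EuclideanSpace ℝ (Fin n)) = μ i • ((b i : L) : EuclideanSpace ℝ (Fin n))
    rw [Smap_mulVec a A hA, ← hTcoe, heig i, Submodule.coe_smul, WithLp.ofLp_smul]
  intro u hu
  set u' : L := ⟨u, hu⟩ with hu'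
  have hrepr := b.sum_inner_mul_inner u' (T u')
  have hterm : ∀ i, ⟪b i, T u'⟫ = μ i * ⟪u', b i⟫ := by
    intro i
    rw [← hT (b i) u', heig i, Submodule.coe_inner, Submodule.coe_smul, real_inner_smul_left]
    congr 1
    rw [Submodule.coe_inner, real_inner_comm]
  have hTself : ⟪u', T u'⟫ = ∑ i, μ i * ⟪u', b i⟫ ^ 2 := by
    rw [← hrepr]
    refine Finset.sum_congr rfl fun i _ => ?_
    rw [hterm i]
    ring
  have hnorm : ‖u'‖ ^ 2 = ∑ i, ⟪u', b i⟫ ^ 2 := by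
    have h := b.sum_inner_mul_inner u' u'
    rw [real_inner_self_eq_norm_sq] at h
    rw [← h]
    refine Finset.sum_congr rfl fun i _ => ?_
    rw [real_inner_comm (b i) u']
    ring
  have hfin : ⟪u, Smap k a u⟫ = ⟪u', T u'⟫ := by
    rw [Submodule.coe_inner, hTcoe]
  rw [hfin, hTself]
  have hun : ‖u‖ = ‖u'‖ := rfl
  rw [hun, hnorm, Finset.mul_sum]
  exact Finset.sum_le_sum fun i _ => mul_le_mul_of_nonneg_right (hlam_le i) (sq_nonneg _)

lemma aux_lam_le_one {n k : ℕ} (a : Fin k → EuclideanSpace ℝ (Fin n))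
    (ha : ∀ i, a i ≠ 0)
    (A : Matrix (Fin n) (Fin n) ℝ)
    (hA : A = (1 / (k : ℝ)) • ∑ i, (‖a i‖ ^ 2)⁻¹ • vecMulVec (a i) (a i))
    (lam : ℝ)
    (hlam_eig : ∃ v : Fin n → ℝ, v ≠ 0 ∧ A.mulVec v = lam • v) : lam ≤ 1 := by
  obtain ⟨v, hv0, hveq⟩ := hlam_eig
  set u : EuclideanSpace ℝ (Fin n) := WithLp.toLp 2 v with hu
  have hu0 : u ≠ 0 := fun h => hv0 (by simpa [hu] using congrArg WithLp.ofLp h)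
  have hSu : Smap k a u = lam • u := by
    apply WithLp.ofLp_injective 2
    rw [← Smap_mulVec a A hA, WithLp.ofLp_smul]; exact hveq
  have h1 : ⟪u, Smap k a u⟫ = lam * ‖u‖ ^ 2 := by
    rw [hSu, real_inner_smul_right, real_inner_self_eq_norm_sq]
  have h2 : ⟪u, Smap k a u⟫ ≤ ‖u‖ ^ 2 := by
    rw [Smap_inner]
    rcases Nat.eq_zero_or_pos k with hk0 | hkpos
    · subst hk0
      simp
    have hknz : (k:ℝ) ≠ 0 := Nat.cast_ne_zero.2 hkpos.ne'
    have hb : ∀ j, (‖a j‖ ^ 2)⁻¹ * (⟪a j, u⟫ * ⟪a j, u⟫) ≤ ‖u‖ ^ 2 := by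
      intro j
      have hca : (0:ℝ) < ‖a j‖ ^ 2 := by
        have := norm_pos_iff.2 (ha j); positivity
      have hcs : ⟪a j, u⟫ ^ 2 ≤ ‖a j‖ ^ 2 * ‖u‖ ^ 2 := by
        have h := abs_real_inner_le_norm (a j) u
        calc ⟪a j, u⟫ ^ 2 = |⟪a j, u⟫| ^ 2 := (sq_abs _).symm
          _ ≤ (‖a j‖ * ‖u‖) ^ 2 := by
              exact pow_le_pow_left₀ (abs_nonneg _) h 2
          _ = ‖a j‖ ^ 2 * ‖u‖ ^ 2 := by ring
      calc (‖a j‖ ^ 2)⁻¹ * (⟪a j, u⟫ * ⟪a j, u⟫) = ⟪a j, u⟫ ^ 2 / ‖a j‖ ^ 2 := by ring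
        _ ≤ (‖a j‖ ^ 2 * ‖u‖ ^ 2) / ‖a j‖ ^ 2 := by gcongr
        _ = ‖u‖ ^ 2 := by have : ‖a j‖ ≠ 0 := norm_ne_zero_iff.2 (ha j); field_simp
    calc (k : ℝ)⁻¹ * ∑ j, (‖a j‖ ^ 2)⁻¹ * (⟪a j, u⟫ * ⟪a j, u⟫)
        ≤ (k : ℝ)⁻¹ * ∑ _j : Fin k, ‖u‖ ^ 2 := by
          refine mul_le_mul_of_nonneg_left (Finset.sum_le_sum fun j _ => hb j) ?_
          positivity
      _ = ‖u‖ ^ 2 := by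
          rw [Finset.sum_const, Finset.card_univ, Fintype.card_fin, nsmul_eq_mul]
          field_simp
  have hupos : 0 < ‖u‖ ^ 2 := by
    have := norm_pos_iff.2 hu0; positivity
  nlinarith

/-- Convergence of the randomized iterated projection process: with `λ` the smallest
positive eigenvalue of `A = (1/k)Σ aᵢaᵢᵀ/|aᵢ|²`, and the chain `X⁰ = x`,
`X^{t+1} = X^t − (a_{i_{t+1}}ᵀX^t/|a_{i_{t+1}}|²)a_{i_{t+1}}` driven by independent
uniform random indices, we have `𝔼(|X^t − y|²) ≤ (1−λ)^t·|z|²` where `y`, `z` are the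
projections of `x` onto `Lᗮ` and `L`. -/
theorem stmt8 {n k : ℕ} (hk : 0 < k) (a : Fin k → EuclideanSpace ℝ (Fin n))
    (ha : ∀ i, a i ≠ 0)
    (L : Submodule ℝ (EuclideanSpace ℝ (Fin n)))
    (hL : L = Submodule.span ℝ (Set.range a))
    (A : Matrix (Fin n) (Fin n) ℝ)
    (hA : A = (1 / (k : ℝ)) • ∑ i, (‖a i‖ ^ 2)⁻¹ • vecMulVec (a i) (a i))
    (lam : ℝ) (hlam_pos : 0 < lam)
    (hlam_eig : ∃ v : Fin n → ℝ, v ≠ 0 ∧ A.mulVec v = lam • v)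
    (hlam_min : ∀ mu : ℝ, 0 < mu → (∃ v : Fin n → ℝ, v ≠ 0 ∧ A.mulVec v = mu • v) →
      lam ≤ mu)
    (x : EuclideanSpace ℝ (Fin n))
    {Ω : Type*} [MeasurableSpace Ω] (μ : Measure Ω) [IsProbabilityMeasure μ]
    (idx : ℕ → Ω → Fin k) (hmeas : ∀ t, Measurable (idx t))
    (hindep : iIndepFun (m := fun _ : ℕ => (inferInstance : MeasurableSpace (Fin k))) idx μ)
    (hunif : ∀ t (j : Fin k), μ {ω | idx t ω = j} = (k : ℝ≥0∞)⁻¹)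
    (X : ℕ → Ω → EuclideanSpace ℝ (Fin n))
    (hX0 : ∀ ω, X 0 ω = x)
    (hXsucc : ∀ t ω, X (t + 1) ω =
      X t ω - (⟪a (idx (t + 1) ω), X t ω⟫ / ‖a (idx (t + 1) ω)‖ ^ 2) • a (idx (t + 1) ω)) :
    ∀ t : ℕ,
      ∫ ω, ‖X t ω - (Submodule.orthogonalProjectionOnto Lᗮ x : EuclideanSpace ℝ (Fin n))‖ ^ 2 ∂μ ≤
        (1 - lam) ^ t * ‖(Submodule.orthogonalProjectionOnto L x : EuclideanSpace ℝ (Fin n))‖ ^ 2 := by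
  have hknz : (k:ℝ) ≠ 0 := Nat.cast_ne_zero.2 hk.ne'
  set y : EuclideanSpace ℝ (Fin n) := (Submodule.orthogonalProjectionOnto Lᗮ x : EuclideanSpace ℝ (Fin n))
    with hy
  set z : EuclideanSpace ℝ (Fin n) := (Submodule.orthogonalProjectionOnto L x : EuclideanSpace ℝ (Fin n))
    with hz
  have hlam1 : lam ≤ 1 := aux_lam_le_one a ha A hA lam hlam_eig
  have haL : ∀ j, a j ∈ L := fun j => hL ▸ Submodule.subset_span ⟨j, rfl⟩
  have hymem : y ∈ Lᗮ := Submodule.coe_mem _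
  have hyperp : ∀ w ∈ L, ⟪w, y⟫ = 0 := fun w hw =>
    ((Submodule.mem_orthogonal L y).1 hymem) w hw
  have hxyz : x - y = z := by
    rw [hy, ← Submodule.starProjection_apply, Submodule.starProjection_orthogonal_val,
      Submodule.starProjection_apply, sub_sub_cancel, hz]
  have hzL : z ∈ L := Submodule.coe_mem _
  -- step identity
  have hstep : ∀ t ω, ‖X (t+1) ω - y‖ ^ 2 = ‖X t ω - y‖ ^ 2
      - ⟪a (idx (t+1) ω), X t ω - y⟫ ^ 2 / ‖a (idx (t+1) ω)‖ ^ 2 := by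
    intro t ω
    rw [hXsucc t ω]
    exact proj_step _ y _ (ha _) (hyperp _ (haL _))
  have hmemL : ∀ t ω, X t ω - y ∈ L := by
    intro t
    induction t with
    | zero => intro ω; rw [hX0 ω, hxyz]; exact hzL
    | succ t ih =>
      intro ω
      rw [hXsucc t ω, sub_right_comm]
      exact Submodule.sub_mem L (ih ω) (L.smul_mem _ (haL _))
  have hbound : ∀ t ω, ‖X t ω - y‖ ^ 2 ≤ ‖z‖ ^ 2 := by
    intro t
    induction t with
    | zero => intro ω; rw [hX0 ω, hxyz]
    | succ t ih =>
      intro ω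
      rw [hstep t ω]
      have h2 : 0 ≤ ⟪a (idx (t+1) ω), X t ω - y⟫ ^ 2 / ‖a (idx (t+1) ω)‖ ^ 2 := by positivity
      linarith [ih ω]
  -- functional representation of X t in terms of indices 1..t
  have hGfun : ∀ t, ∃ G : (Fin t → Fin k) → EuclideanSpace ℝ (Fin n),
      ∀ ω, X t ω = G (fun s => idx (s.1 + 1) ω) := by
    intro t
    induction t with
    | zero => exact ⟨fun _ => x, fun ω => hX0 ω⟩
    | succ t ih =>
      obtain ⟨G, hG⟩ := ih
      refine ⟨fun f => (fun w => w - (⟪a (f (Fin.last t)), w⟫ / ‖a (f (Fin.last t))‖ ^ 2) •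
        a (f (Fin.last t))) (G (fun s => f s.castSucc)), fun ω => ?_⟩
      rw [hXsucc t ω, hG ω]
      simp [Fin.val_last, Fin.coe_castSucc]
  have hmeasX : ∀ t, Measurable (X t) := by
    intro t
    obtain ⟨G, hG⟩ := hGfun t
    have hXt : X t = G ∘ (fun ω => fun s : Fin t => idx (s.1 + 1) ω) := funext fun ω => hG ω
    rw [hXt]
    exact (measurable_of_countable G).comp (measurable_pi_lambda _ fun s => hmeas _)
  have hindepX : ∀ t, IndepFun (X t) (idx (t+1)) μ := by
    intro t
    obtain ⟨G, hG⟩ := hGfun t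
    have hdisj : Disjoint (Finset.Ioc 0 t) ({t+1} : Finset ℕ) := by
      rw [Finset.disjoint_singleton_right, Finset.mem_Ioc]
      omega
    have h1 := hindep.indepFun_finset (Finset.Ioc 0 t) {t+1} hdisj hmeas
    have hXt : X t = fun ω => G (fun s : Fin t => idx (s.1 + 1) ω) := funext fun ω => hG ω
    rw [hXt]
    exact h1.comp
      (φ := fun g : ((i : (Finset.Ioc 0 t : Finset ℕ)) → Fin k) =>
        G (fun s : Fin t => g ⟨s.1 + 1, Finset.mem_Ioc.2 ⟨Nat.succ_pos _, Nat.succ_le_of_lt s.2⟩⟩))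
      (ψ := fun g : ((i : ({t+1} : Finset ℕ)) → Fin k) => g ⟨t+1, Finset.mem_singleton_self _⟩)
      (measurable_of_countable _) (measurable_of_countable _)
  -- integrability helper
  have intbd : ∀ (g : Ω → ℝ) (C : ℝ), Measurable g → (∀ ω, |g ω| ≤ C) → Integrable g μ := by
    intro g C hg hb
    exact (integrable_const C).mono' hg.aestronglyMeasurable
      (ae_of_all μ fun ω => by simpa [Real.norm_eq_abs] using hb ω)
  -- the one-step projection maps
  set H : Fin k → EuclideanSpace ℝ (Fin n) → ℝ :=
    fun j w => ‖w - (⟪a j, w⟫ / ‖a j‖ ^ 2) • a j - y‖ ^ 2 with hH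
  have hHid : ∀ j w, H j w = ‖w - y‖ ^ 2 - ⟪a j, w - y⟫ ^ 2 / ‖a j‖ ^ 2 := fun j w =>
    proj_step _ y w (ha j) (hyperp _ (haL j))
  have hHcont : ∀ j, Continuous (H j) := by
    intro j
    have h1 : Continuous fun w : EuclideanSpace ℝ (Fin n) => ⟪a j, w⟫ :=
      (innerSL ℝ (a j)).continuous
    have h2 : Continuous fun w : EuclideanSpace ℝ (Fin n) =>
        w - (⟪a j, w⟫ / ‖a j‖ ^ 2) • a j - y :=
      (continuous_id.sub ((h1.div_const _).smul continuous_const)).sub continuous_const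
    exact h2.norm.pow 2
  have hHnonneg : ∀ j w, 0 ≤ H j w := fun j w => sq_nonneg _
  have hHle : ∀ j w, H j w ≤ ‖w - y‖ ^ 2 := by
    intro j w
    rw [hHid]
    have : 0 ≤ ⟪a j, w - y⟫ ^ 2 / ‖a j‖ ^ 2 := by positivity
    linarith
  intro t
  induction t with
  | zero =>
    have : ∀ ω, ‖X 0 ω - y‖ ^ 2 = ‖z‖ ^ 2 := fun ω => by rw [hX0 ω, hxyz]
    rw [integral_congr_ae (ae_of_all μ this)]
    simp
  | succ t ih =>
    have hmXt : Measurable fun ω => ‖X t ω - y‖ ^ 2 := by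
      have := hmeasX t
      fun_prop
    have int_norm : Integrable (fun ω => ‖X t ω - y‖ ^ 2) μ :=
      intbd _ (‖z‖ ^ 2) hmXt fun ω => by
        rw [abs_of_nonneg (sq_nonneg _)]; exact hbound t ω
    have hmH : ∀ j, Measurable fun ω => H j (X t ω) := fun j =>
      (hHcont j).measurable.comp (hmeasX t)
    have int_H : ∀ j, Integrable (fun ω => H j (X t ω)) μ := fun j =>
      intbd _ (‖z‖ ^ 2) (hmH j) fun ω => by
        rw [abs_of_nonneg (hHnonneg j _)]
        exact le_trans (hHle j _) (hbound t ω)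
    have hmind : ∀ j : Fin k, Measurable fun ω => (if idx (t+1) ω = j then (1:ℝ) else 0) :=
      fun j => (measurable_of_countable (fun i : Fin k => if i = j then (1:ℝ) else 0)).comp
        (hmeas (t+1))
    have int_ind : ∀ j : Fin k,
        Integrable (fun ω => (if idx (t+1) ω = j then (1:ℝ) else 0)) μ := fun j =>
      intbd _ 1 (hmind j) fun ω => by split <;> simp
    have int_prod : ∀ j : Fin k,
        Integrable (fun ω => (if idx (t+1) ω = j then (1:ℝ) else 0) * H j (X t ω)) μ := by
      intro j
      refine intbd _ (‖z‖ ^ 2) ((hmind j).mul (hmH j)) fun ω => ?_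
      rw [abs_mul]
      have h1 : |if idx (t+1) ω = j then (1:ℝ) else 0| ≤ 1 := by split <;> simp
      have h2 : |H j (X t ω)| ≤ ‖z‖ ^ 2 := by
        rw [abs_of_nonneg (hHnonneg j _)]
        exact le_trans (hHle j _) (hbound t ω)
      calc |if idx (t+1) ω = j then (1:ℝ) else 0| * |H j (X t ω)|
          ≤ 1 * ‖z‖ ^ 2 := by
            exact mul_le_mul h1 h2 (abs_nonneg _) zero_le_one
        _ = ‖z‖ ^ 2 := one_mul _
    have int_sum : Integrable (fun ω => ∑ j, (k:ℝ)⁻¹ * H j (X t ω)) μ :=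
      integrable_finset_sum _ fun j _ => (int_H j).const_mul _
    have int_rhs : Integrable (fun ω => (1 - lam) * ‖X t ω - y‖ ^ 2) μ :=
      int_norm.const_mul _
    have hintind : ∀ j : Fin k,
        ∫ ω, (if idx (t+1) ω = j then (1:ℝ) else 0) ∂μ = (k:ℝ)⁻¹ := by
      intro j
      have heq : (fun ω => if idx (t+1) ω = j then (1:ℝ) else 0)
          = Set.indicator {ω | idx (t+1) ω = j} (fun _ => (1:ℝ)) := by
        funext ω
        rw [Set.indicator_apply]
        simp [Set.mem_setOf_eq]
      have hms : MeasurableSet {ω | idx (t+1) ω = j} :=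
        hmeas (t+1) (measurableSet_singleton j)
      rw [heq, integral_indicator_const _ hms, measureReal_def, hunif (t+1) j]
      simp [ENNReal.toReal_inv]
    calc ∫ ω, ‖X (t+1) ω - y‖ ^ 2 ∂μ
        = ∫ ω, ∑ j, (if idx (t+1) ω = j then (1:ℝ) else 0) * H j (X t ω) ∂μ := by
          refine integral_congr_ae (ae_of_all μ fun ω => ?_)
          show ‖X (t+1) ω - y‖ ^ 2
            = ∑ j, (if idx (t+1) ω = j then (1:ℝ) else 0) * H j (X t ω)
          have hsum1 : ∑ j, (if idx (t+1) ω = j then (1:ℝ) else 0) * H j (X t ω)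
              = H (idx (t+1) ω) (X t ω) := by
            rw [Finset.sum_eq_single (idx (t+1) ω)]
            · simp
            · intro j _ hne
              simp [Ne.symm hne]
            · intro h
              exact absurd (Finset.mem_univ _) h
          rw [hsum1, hXsucc t ω]
      _ = ∑ j, ∫ ω, (if idx (t+1) ω = j then (1:ℝ) else 0) * H j (X t ω) ∂μ :=
          integral_finset_sum _ fun j _ => int_prod j
      _ = ∑ j, (∫ ω, (if idx (t+1) ω = j then (1:ℝ) else 0) ∂μ) * ∫ ω, H j (X t ω) ∂μ := by
          refine Finset.sum_congr rfl fun j _ => ?_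
          exact ((hindepX t).symm.comp
            (φ := fun i : Fin k => if i = j then (1:ℝ) else 0) (ψ := H j)
            (measurable_of_countable _) (hHcont j).measurable).integral_mul_eq_mul_integral
            (int_ind j).aestronglyMeasurable (int_H j).aestronglyMeasurable
      _ = ∑ j, ∫ ω, (k:ℝ)⁻¹ * H j (X t ω) ∂μ := by
          refine Finset.sum_congr rfl fun j _ => ?_
          rw [hintind j, integral_const_mul]
      _ = ∫ ω, ∑ j, (k:ℝ)⁻¹ * H j (X t ω) ∂μ :=
          (integral_finset_sum _ fun j _ => (int_H j).const_mul _).symm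
      _ ≤ ∫ ω, (1 - lam) * ‖X t ω - y‖ ^ 2 ∂μ := by
          refine integral_mono int_sum int_rhs fun ω => ?_
          show ∑ j, (k:ℝ)⁻¹ * H j (X t ω) ≤ (1 - lam) * ‖X t ω - y‖ ^ 2
          have hq := aux_quad hk a ha L hL A hA lam hlam_min (X t ω - y) (hmemL t ω)
          rw [Smap_inner] at hq
          have hsum : ∑ j, (k:ℝ)⁻¹ * H j (X t ω)
              = ‖X t ω - y‖ ^ 2
                - (k:ℝ)⁻¹ * ∑ j, (‖a j‖ ^ 2)⁻¹ * (⟪a j, X t ω - y⟫ * ⟪a j, X t ω - y⟫) := by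
            have hterm : ∀ j : Fin k, (k:ℝ)⁻¹ * H j (X t ω)
                = (k:ℝ)⁻¹ * ‖X t ω - y‖ ^ 2
                  - (k:ℝ)⁻¹ * ((‖a j‖ ^ 2)⁻¹ * (⟪a j, X t ω - y⟫ * ⟪a j, X t ω - y⟫)) := by
              intro j
              rw [hHid j]
              have hanz : ‖a j‖ ^ 2 ≠ 0 := pow_ne_zero _ (norm_ne_zero_iff.2 (ha j))
              field_simp
            rw [Finset.sum_congr rfl fun j _ => hterm j, Finset.sum_sub_distrib,
              Finset.sum_const, Finset.card_univ, Fintype.card_fin, ← Finset.mul_sum,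
              nsmul_eq_mul]
            congr 1
            field_simp
          rw [hsum]
          nlinarith [hq]
      _ = (1 - lam) * ∫ ω, ‖X t ω - y‖ ^ 2 ∂μ := integral_const_mul _ _
      _ ≤ (1 - lam) * ((1 - lam) ^ t * ‖z‖ ^ 2) :=
          mul_le_mul_of_nonneg_left ih (by linarith)
      _ = (1 - lam) ^ (t + 1) * ‖z‖ ^ 2 := by ring
end

section
/- Let ε > 0 and let z₁,…,z_k be linearly independent vectors in ℝᵐ with |z_i| ≤ 1 for all i, whose Gram–Schmidt orthogonalization z₁* = z₁, z₂*, …, z_k* satisfies |z_j*| ≥ ε for all j. If real numbers α₁,…,α_k satisfy |Σ_{i=1}^k α_i z_i| ≤ 1, then for every j, |α_j| ≤ (1/ε)·(1 + 1/ε)^{k−j}. -/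
open scoped RealInnerProductSpace

/-- If `z₁,…,z_k` are linearly independent with `|z_i| ≤ 1` and their Gram–Schmidt
orthogonalization satisfies `|z_j*| ≥ ε`, then `|Σ α_i z_i| ≤ 1` forces
`|α_j| ≤ (1/ε)(1 + 1/ε)^{k−j}` (here indices are 0-based, so the exponent is `k−1−j`). -/
theorem stmt11 {m k : ℕ} (ε : ℝ) (hε : 0 < ε) (z : Fin k → EuclideanSpace ℝ (Fin m))
    (hli : LinearIndependent ℝ z) (hnorm : ∀ i, ‖z i‖ ≤ 1)
    (hgs : ∀ j : Fin k,
      ε ≤ ‖@InnerProductSpace.gramSchmidt ℝ _ _ _ _ (Fin k) _ _ (inferInstanceAs (WellFoundedLT (Fin k))) z j‖)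
    (α : Fin k → ℝ) (hα : ‖∑ i, α i • z i‖ ≤ 1) :
    ∀ j : Fin k, |α j| ≤ (1 / ε) * (1 + 1 / ε) ^ (k - 1 - (j : ℕ)) := by
  haveI : WellFoundedLT (Fin k) := inferInstanceAs (WellFoundedLT (Fin k))
  set g : Fin k → EuclideanSpace ℝ (Fin m) := @InnerProductSpace.gramSchmidt ℝ _ _ _ _ (Fin k) _ _ (inferInstanceAs (WellFoundedLT (Fin k))) z with hg
  set S : Fin k → ℝ := fun j => ∑ i ∈ Finset.Ioi j, |α i| with hS
  -- key inequality
  have key : ∀ j : Fin k, ε * |α j| ≤ 1 + S j := by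
    intro j
    have hgj : (0:ℝ) < ‖g j‖ := lt_of_lt_of_le hε (hgs j)
    have h3 : ⟪g j, z j⟫ = ‖g j‖ ^ 2 := by
      conv_lhs => rw [InnerProductSpace.gramSchmidt_def'' ℝ z j]
      rw [inner_add_right, inner_sum, real_inner_self_eq_norm_sq, Finset.sum_eq_zero,
        add_zero]
      intro i hi
      have horth : ⟪g j, InnerProductSpace.gramSchmidt ℝ z i⟫ = 0 :=
        InnerProductSpace.gramSchmidt_orthogonal ℝ z (Finset.mem_Iio.1 hi).ne'
      rw [real_inner_smul_right, horth, mul_zero]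
    have h1 : ⟪g j, ∑ i, α i • z i⟫ = ∑ i, α i * ⟪g j, z i⟫ := by
      rw [inner_sum]
      exact Finset.sum_congr rfl fun i _ => real_inner_smul_right _ _ _
    have h2 : ∑ i, α i * ⟪g j, z i⟫
        = α j * ‖g j‖ ^ 2 + ∑ i ∈ Finset.Ioi j, α i * ⟪g j, z i⟫ := by
      rw [← h3]
      rw [← Finset.sum_subset (Finset.subset_univ (Finset.Ici j))]
      · rw [← Finset.Ioi_insert, Finset.sum_insert (Finset.notMem_Ioi_self)]
      · intro i _ hi
        rw [InnerProductSpace.gramSchmidt_inv_triangular ℝ z (by simpa using hi), mul_zero]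
    -- bound
    have hbound : |α j| * ‖g j‖ ^ 2 ≤ ‖g j‖ * (1 + S j) := by
      have e1 : α j * ‖g j‖ ^ 2
          = ⟪g j, ∑ i, α i • z i⟫ - ∑ i ∈ Finset.Ioi j, α i * ⟪g j, z i⟫ := by
        rw [h1, h2]; ring
      calc |α j| * ‖g j‖ ^ 2 = |α j * ‖g j‖ ^ 2| := by
            rw [abs_mul, abs_of_nonneg (by positivity : (0:ℝ) ≤ ‖g j‖ ^ 2)]
        _ ≤ |⟪g j, ∑ i, α i • z i⟫| + |∑ i ∈ Finset.Ioi j, α i * ⟪g j, z i⟫| := by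
            rw [e1]; exact abs_sub _ _
        _ ≤ ‖g j‖ * 1 + ∑ i ∈ Finset.Ioi j, |α i| * ‖g j‖ := by
            gcongr
            · exact le_trans (abs_real_inner_le_norm _ _) (by gcongr)
            · refine le_trans (Finset.abs_sum_le_sum_abs _ _) ?_
              refine Finset.sum_le_sum fun i _ => ?_
              rw [abs_mul]
              gcongr
              exact le_trans (abs_real_inner_le_norm _ _)
                (by nlinarith [hnorm i, norm_nonneg (g j)])
        _ = ‖g j‖ * (1 + S j) := by
            simp only [hS, mul_one, mul_add, Finset.mul_sum]
            congr 1
            exact Finset.sum_congr rfl fun i _ => mul_comm _ _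
    have h4 : |α j| * ‖g j‖ ≤ 1 + S j := by
      have := hbound
      rw [pow_two, ← mul_assoc] at this
      exact le_of_mul_le_mul_right (by linarith [this]) hgj
    calc ε * |α j| ≤ ‖g j‖ * |α j| :=
          mul_le_mul_of_nonneg_right (hgs j) (abs_nonneg _)
      _ = |α j| * ‖g j‖ := mul_comm _ _
      _ ≤ 1 + S j := h4
  -- geometric bound on S by downward induction
  have hQ : ∀ n : ℕ, ∀ j : Fin k, k - 1 - (j : ℕ) ≤ n →
      1 + S j ≤ (1 + 1 / ε) ^ (k - 1 - (j : ℕ)) := by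
    intro n
    induction n with
    | zero =>
      intro j hj
      have hjk : (j : ℕ) = k - 1 := by omega
      have : Finset.Ioi j = ∅ := by
        ext i
        simp only [Finset.mem_Ioi, Finset.notMem_empty, iff_false, not_lt]
        exact Fin.le_def.2 (by omega)
      rw [hS]
      simp [this, hjk]
    | succ n ih =>
      intro j hj
      by_cases hcase : k - 1 - (j : ℕ) ≤ n
      · exact ih j hcase
      · have hjlt : (j : ℕ) + 1 < k := by omega
        set j' : Fin k := ⟨(j : ℕ) + 1, hjlt⟩ with hj'
        have hins : Finset.Ioi j = insert j' (Finset.Ioi j') := by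
          ext i
          simp only [Finset.mem_Ioi, Finset.mem_insert, Fin.lt_def, Fin.ext_iff, hj']
          omega
        have hSj : S j = |α j'| + S j' := by
          rw [hS]
          simp only
          rw [hins, Finset.sum_insert Finset.notMem_Ioi_self]
        have hα' : |α j'| ≤ (1 / ε) * (1 + S j') := by
          have := key j'
          rw [div_mul_eq_mul_div, le_div_iff₀ hε, one_mul, mul_comm]
          exact this
        have hj'n : k - 1 - (j' : ℕ) ≤ n := by simp only [hj']; omega
        have hQ' : 1 + S j' ≤ (1 + 1 / ε) ^ (k - 1 - ((j' : Fin k) : ℕ)) := ih j' hj'n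
        have hSnn : 0 ≤ S j' := Finset.sum_nonneg fun i _ => abs_nonneg _
        have hpow : (1 + 1 / ε) ^ (k - 1 - ((j' : Fin k) : ℕ)) * (1 + 1 / ε)
            = (1 + 1 / ε) ^ (k - 1 - (j : ℕ)) := by
          rw [← pow_succ]
          congr 1
          simp only [hj']
          omega
        calc 1 + S j = (1 + S j') + |α j'| := by rw [hSj]; ring
          _ ≤ (1 + S j') + (1 / ε) * (1 + S j') := by linarith
          _ = (1 + S j') * (1 + 1 / ε) := by ring
          _ ≤ (1 + 1 / ε) ^ (k - 1 - ((j' : Fin k) : ℕ)) * (1 + 1 / ε) := by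
              gcongr
          _ = (1 + 1 / ε) ^ (k - 1 - (j : ℕ)) := hpow
  intro j
  have h5 : 1 + S j ≤ (1 + 1 / ε) ^ (k - 1 - (j : ℕ)) := hQ _ j le_rfl
  have h6 := key j
  rw [div_mul_eq_mul_div, le_div_iff₀ hε, one_mul, mul_comm]
  linarith
end
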